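/- Let n be a positive integer and z > 0. Then the modified Bessel function of half-integer order n − 1/2 satisfies the finite closed form I_{n−1/2}(z) = Σ_{l=0}^{n−1} (−1)^l Γ(n+l) e^{z} / ( l! √π Γ(n−l) (2z)^{l+1/2} ) + Σ_{l=0}^{n−1} (−1)^n Γ(n+l) e^{−z} / ( l! √π Γ(n−l) (2z)^{l+1/2} ). -/

import Mathlib

open MeasureTheory Real Filter

/-- Upper incomplete gamma function `Γ(s,x) = ∫_x^∞ t^(s-1) e^(-t) dt`. -/
noncomputable def uGamma (s x : ℝ) : ℝ := ∫ t in Set.Ioi x, t ^ (s - 1) * Real.exp (-t)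

/-- Generalized Marcum Q-function, defined by its canonical series
`Q_m(a,b) = Σ_{l=0}^∞ e^{-a²/2} (a²/2)^l / l! · Γ(m+l, b²/2)/Γ(m+l)`. -/
noncomputable def marcumQ (m a b : ℝ) : ℝ :=
  ∑' l : ℕ, Real.exp (-(a ^ 2) / 2) * (a ^ 2 / 2) ^ l / (Nat.factorial l) *
    (uGamma (m + l) (b ^ 2 / 2) / Real.Gamma (m + l))

/-- Pochhammer symbol `(x)_n = Γ(x+n)/Γ(x)`. -/
noncomputable def poch (x : ℝ) (n : ℕ) : ℝ := Real.Gamma (x + n) / Real.Gamma x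

/-- Kummer confluent hypergeometric function `₁F₁(α,β,z) = Σ_n (α)_n z^n / ((β)_n n!)`. -/
noncomputable def kummer (α β z : ℝ) : ℝ :=
  ∑' n : ℕ, poch α n * z ^ n / (poch β n * Nat.factorial n)

/-- Modified Bessel function of the first kind
`I_ν(z) = Σ_j (z/2)^(ν+2j) / (j! Γ(ν+j+1))`. -/
noncomputable def besselI (ν z : ℝ) : ℝ :=
  ∑' j : ℕ, (z / 2) ^ (ν + 2 * j) / (Nat.factorial j * Real.Gamma (ν + j + 1))

/- ------------------ auxiliary lemmas ------------------ -/

lemma gamma_half (m : ℕ) :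
    Real.Gamma ((m : ℝ) + 1/2) = (2*m).factorial * Real.sqrt π / (4^m * m.factorial) := by
  induction m with
  | zero => norm_num [Real.Gamma_one_half_eq]
  | succ m ih =>
    have h : ((m:ℝ)+1) + 1/2 = ((m:ℝ) + 1/2) + 1 := by ring
    push_cast
    rw [h, Real.Gamma_add_one (by positivity), ih]
    have h2 : ((2*(m+1)).factorial : ℝ) = (2*m+2)*(2*m+1)*(2*m).factorial := by
      have : 2*(m+1) = (2*m+1)+1 := by ring
      rw [this]; push_cast [Nat.factorial_succ]; ring
    push_cast [h2, Nat.factorial_succ]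
    field_simp
    ring

lemma gamma_ge (ν : ℝ) (hν : 0 ≤ ν) (j : ℕ) : Real.Gamma (ν + 1) ≤ Real.Gamma (ν + j + 1) := by
  induction j with
  | zero => simp
  | succ j ih =>
    have h1 : ν + (j+1 : ℕ) + 1 = (ν + j + 1) + 1 := by push_cast; ring
    rw [h1, Real.Gamma_add_one (by positivity : (0:ℝ) < ν + j + 1).ne']
    have hGj : 0 < Real.Gamma (ν + j + 1) := Real.Gamma_pos_of_pos (by positivity)
    nlinarith [(Nat.cast_nonneg j : (0:ℝ) ≤ j)]

lemma term_eq (ν z : ℝ) (hz : 0 < z) (j : ℕ) :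
    (z / 2) ^ (ν + 2 * j) = (z/2) ^ ν * ((z/2)^2)^j := by
  rw [Real.rpow_add (by positivity)]
  congr 1
  rw [← Real.rpow_natCast ((z/2)^2) j, ← Real.rpow_natCast (z/2) 2, ← Real.rpow_mul (by positivity)]
  norm_num [mul_comm]

lemma besselI_summable (ν : ℝ) (hν : 0 ≤ ν) (z : ℝ) (hz : 0 < z) :
    Summable (fun j : ℕ => (z / 2) ^ (ν + 2 * j) / (Nat.factorial j * Real.Gamma (ν + j + 1))) := by
  have hG : 0 < Real.Gamma (ν + 1) := Real.Gamma_pos_of_pos (by positivity)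
  have hsum : Summable (fun j : ℕ => (z/2)^ν * ((z/2)^2)^j / (Nat.factorial j * Real.Gamma (ν+1))) := by
    have := (Real.summable_pow_div_factorial ((z/2)^2)).mul_left ((z/2)^ν / Real.Gamma (ν+1))
    apply this.congr
    intro j
    field_simp
  apply Summable.of_nonneg_of_le _ _ hsum
  · intro j
    have hGj : 0 < Real.Gamma (ν + j + 1) := Real.Gamma_pos_of_pos (by positivity)
    have hp : (0:ℝ) < (z/2) ^ (ν + 2*j) := Real.rpow_pos_of_pos (by positivity) _
    positivity
  · intro j
    rw [term_eq ν z hz]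
    have hGj : 0 < Real.Gamma (ν + j + 1) := Real.Gamma_pos_of_pos (by positivity)
    have hf : (0:ℝ) < (j.factorial : ℝ) := by exact_mod_cast j.factorial_pos
    gcongr
    exact gamma_ge ν hν j

lemma besselI_rec (ν z : ℝ) (hν : 1 ≤ ν) (hz : 0 < z) :
    besselI (ν+1) z = besselI (ν-1) z - (2*ν/z) * besselI ν z := by
  have hz2 : (0:ℝ) < z/2 := by positivity
  have hν0 : (0:ℝ) < ν := lt_of_lt_of_le one_pos hν
  have Sm := besselI_summable (ν-1) (by linarith) z hz
  have S0 := besselI_summable ν (by linarith) z hz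
  set g : ℕ → ℝ := fun j => (z/2)^(ν-1+2*(j:ℝ))/(Nat.factorial j * Real.Gamma (ν-1+j+1))
      - 2*ν/z * ((z/2)^(ν+2*(j:ℝ))/(Nat.factorial j * Real.Gamma (ν+j+1))) with hgdef
  have hg : Summable g := Sm.sub (S0.mul_left _)
  have h1 : besselI (ν-1) z - (2*ν/z) * besselI ν z = ∑' j, g j := by
    unfold besselI
    rw [← tsum_mul_left, ← Summable.tsum_sub Sm (S0.mul_left _)]
  have hg0 : g 0 = 0 := by
    simp only [hgdef]
    have hGp : (0:ℝ) < Real.Gamma ν := Real.Gamma_pos_of_pos hν0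
    have e2 : ν + ((0:ℕ):ℝ) + 1 = ν + 1 := by push_cast; ring
    have e3 : ν - 1 + ((0:ℕ):ℝ) + 1 = ν := by push_cast; ring
    have e1' : ν + 2*((0:ℕ):ℝ) = (ν-1) + 1 := by push_cast; ring
    have e3' : ν - 1 + 2*((0:ℕ):ℝ) = ν - 1 := by push_cast; ring
    rw [e1', e2, e3, e3', Real.rpow_add hz2 (ν-1) 1, Real.rpow_one, Real.Gamma_add_one hν0.ne']
    have hp : (0:ℝ) < (z/2)^(ν-1) := Real.rpow_pos_of_pos hz2 _
    field_simp
    ring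
  have hgs : ∀ j : ℕ, g (j+1) = (z/2)^((ν+1)+2*(j:ℝ))/(Nat.factorial j * Real.Gamma ((ν+1)+j+1)) := by
    intro j
    simp only [hgdef]
    have hG1 : (0:ℝ) < ν + j + 1 := by positivity
    have hGp : (0:ℝ) < Real.Gamma (ν+j+1) := Real.Gamma_pos_of_pos hG1
    have e1 : ν - 1 + 2*((j+1:ℕ):ℝ) = (ν-1+2*(j:ℝ)) + 2 := by push_cast; ring
    have e2 : ν + 2*((j+1:ℕ):ℝ) = (ν-1+2*(j:ℝ)) + 3 := by push_cast; ring
    have e3 : ν + 1 + 2*(j:ℝ) = (ν-1+2*(j:ℝ)) + 2 := by ring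
    have e4 : ν - 1 + ((j+1:ℕ):ℝ) + 1 = ν + j + 1 := by push_cast; ring
    have e5 : ν + ((j+1:ℕ):ℝ) + 1 = (ν + j + 1) + 1 := by push_cast; ring
    have e6 : ν + 1 + (j:ℝ) + 1 = (ν + j + 1) + 1 := by ring
    rw [e1, e2, e3, e4, e5, e6, Real.Gamma_add_one hG1.ne',
      Real.rpow_add hz2 (ν-1+2*(j:ℝ)) (2:ℝ), Real.rpow_add hz2 (ν-1+2*(j:ℝ)) (3:ℝ)]
    have hp : (0:ℝ) < (z/2)^(ν-1+2*(j:ℝ)) := Real.rpow_pos_of_pos hz2 _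
    have hf : (0:ℝ) < (j.factorial : ℝ) := by exact_mod_cast j.factorial_pos
    have hfs : ((j+1).factorial : ℝ) = (j+1) * j.factorial := by
      push_cast [Nat.factorial_succ]; ring
    rw [hfs]
    have h2 : (z/2:ℝ)^(2:ℝ) = (z/2)*(z/2) := by
      rw [show (2:ℝ) = ((2:ℕ):ℝ) by norm_num, Real.rpow_natCast]; ring
    have h3 : (z/2:ℝ)^(3:ℝ) = (z/2)*(z/2)*(z/2) := by
      rw [show (3:ℝ) = ((3:ℕ):ℝ) by norm_num, Real.rpow_natCast]; ring
    rw [h2, h3]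
    field_simp
    ring
  rw [h1, Summable.tsum_eq_zero_add hg, hg0, zero_add]
  unfold besselI
  exact (tsum_congr hgs).symm

lemma half_mul (z : ℝ) (hz : 0 < z) : (z/2 : ℝ) ^ ((1:ℝ)/2) * (2*z) ^ ((1:ℝ)/2) = z := by
  rw [← Real.mul_rpow (by positivity) (by positivity)]
  have : (z/2) * (2*z) = z^2 := by ring
  rw [this, ← Real.rpow_natCast z 2, ← Real.rpow_mul hz.le]
  norm_num

lemma half_eq (z : ℝ) (hz : 0 < z) : (z/2 : ℝ) ^ ((1:ℝ)/2) = z / (2*z) ^ ((1:ℝ)/2) := by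
  rw [eq_div_iff (by positivity : ((2*z:ℝ) ^ ((1:ℝ)/2)) ≠ 0)]
  exact half_mul z hz

lemma bI_half (z : ℝ) (hz : 0 < z) :
    besselI (1/2 : ℝ) z = (Real.exp z - Real.exp (-z)) / (Real.sqrt π * (2*z) ^ ((1:ℝ)/2)) := by
  have hq : (0:ℝ) < (2*z) ^ ((1:ℝ)/2) := Real.rpow_pos_of_pos (by positivity) _
  have hπ : (0:ℝ) < Real.sqrt π := Real.sqrt_pos.mpr Real.pi_pos
  unfold besselI
  have key : ∀ j : ℕ, (z / 2) ^ ((1:ℝ)/2 + 2 * j) / (Nat.factorial j * Real.Gamma ((1:ℝ)/2 + j + 1))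
      = 2 / (Real.sqrt π * (2*z) ^ ((1:ℝ)/2)) * (z ^ (2*j+1) / (Nat.factorial (2*j+1))) := by
    intro j
    rw [term_eq _ _ hz, half_eq z hz]
    have eΓ : (1:ℝ)/2 + j + 1 = ((j+1 : ℕ) : ℝ) + 1/2 := by push_cast; ring
    rw [eΓ, gamma_half (j+1)]
    have hfact1 : ((2*(j+1)).factorial : ℝ) = (2*j+2) * (2*j+1).factorial := by
      have : 2*(j+1) = (2*j+1)+1 := by ring
      rw [this, Nat.factorial_succ]; push_cast; ring
    have hfact2 : ((j+1).factorial : ℝ) = (j+1) * j.factorial := by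
      rw [Nat.factorial_succ]; push_cast; ring
    have hpow : ((z/2:ℝ)^2)^j = z^(2*j) / 4^j := by
      rw [div_pow, div_pow, ← pow_mul, ← pow_mul]; congr 1; rw [pow_mul]; norm_num
    have hzz : z^(2*j+1) = z^(2*j) * z := by ring
    rw [hfact1, hfact2, hpow, hzz]
    have hf : (0:ℝ) < (j.factorial : ℝ) := by exact_mod_cast j.factorial_pos
    have hf2 : (0:ℝ) < ((2*j+1).factorial : ℝ) := by exact_mod_cast (2*j+1).factorial_pos
    have h4 : (0:ℝ) < (4:ℝ)^j := by positivity
    field_simp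
    ring
  rw [tsum_congr key, tsum_mul_left, (Real.hasSum_sinh z).tsum_eq, Real.sinh_eq]
  field_simp

lemma bI_3half (z : ℝ) (hz : 0 < z) :
    besselI ((3:ℝ)/2) z = (Real.exp z + Real.exp (-z)) / (Real.sqrt π * (2*z) ^ ((1:ℝ)/2))
      - 2*(Real.exp z - Real.exp (-z)) / (Real.sqrt π * (2*z) ^ ((3:ℝ)/2)) := by
  have hq : (0:ℝ) < (2*z) ^ ((1:ℝ)/2) := Real.rpow_pos_of_pos (by positivity) _
  have hπ : (0:ℝ) < Real.sqrt π := Real.sqrt_pos.mpr Real.pi_pos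
  have hz2 : (0:ℝ) < z/2 := by positivity
  unfold besselI
  have key : ∀ j : ℕ, (z / 2) ^ ((3:ℝ)/2 + 2 * j) / (Nat.factorial j * Real.Gamma ((3:ℝ)/2 + j + 1))
      = 2 / (Real.sqrt π * (2*z) ^ ((1:ℝ)/2)) *
        ((2*(j+1)) * z ^ (2*(j+1)) / (Nat.factorial (2*(j+1)+1))) := by
    intro j
    rw [term_eq _ _ hz]
    rw [show (3:ℝ)/2 = 1 + (1:ℝ)/2 by norm_num, Real.rpow_add hz2, Real.rpow_one, half_eq z hz]
    have eΓ : 1 + (1:ℝ)/2 + j + 1 = ((j+2 : ℕ) : ℝ) + 1/2 := by push_cast; ring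
    rw [eΓ, gamma_half (j+2)]
    have hfact1 : ((2*(j+2)).factorial : ℝ) = (2*j+4) * (2*(j+1)+1).factorial := by
      have : 2*(j+2) = (2*(j+1)+1)+1 := by ring
      rw [this, Nat.factorial_succ]; push_cast; ring
    have hfact2 : ((j+2).factorial : ℝ) = (j+2) * ((j+1) * j.factorial) := by
      rw [show j+2 = (j+1)+1 from rfl, Nat.factorial_succ, Nat.factorial_succ]; push_cast; ring
    have hpow : ((z/2:ℝ)^2)^j = z^(2*j) / 4^j := by
      rw [div_pow, div_pow, ← pow_mul, ← pow_mul]; congr 1; rw [pow_mul]; norm_num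
    have hzz : z^(2*(j+1)) = z^(2*j) * z^2 := by ring
    rw [hfact1, hfact2, hpow, hzz]
    have hf : (0:ℝ) < (j.factorial : ℝ) := by exact_mod_cast j.factorial_pos
    have hf2 : (0:ℝ) < ((2*(j+1)+1).factorial : ℝ) := by exact_mod_cast (2*(j+1)+1).factorial_pos
    have h4 : (0:ℝ) < (4:ℝ)^j := by positivity
    field_simp
    ring
  rw [tsum_congr key, tsum_mul_left]
  have hF : HasSum (fun k : ℕ => (2*k) * z^(2*k) / (Nat.factorial (2*k+1)))
      (Real.cosh z - Real.sinh z / z) := by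
    have h2 : ∀ k : ℕ, z^(2*k)/(Nat.factorial (2*k)) - (z^(2*k+1)/(Nat.factorial (2*k+1)))/z
        = (2*k) * z^(2*k) / (Nat.factorial (2*k+1)) := by
      intro k
      have e1 : ((2*k+1).factorial : ℝ) = (2*k+1) * (2*k).factorial := by
        rw [Nat.factorial_succ]; push_cast; ring
      have hf : (0:ℝ) < ((2*k).factorial : ℝ) := by exact_mod_cast (2*k).factorial_pos
      have hzp : z^(2*k+1) = z^(2*k) * z := by ring
      rw [e1, hzp]
      field_simp
      ring
    have := (Real.hasSum_cosh z).sub ((Real.hasSum_sinh z).div_const z)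
    exact (funext h2 : _) ▸ this
  have hshift : HasSum (fun j : ℕ => (2*(j+1)) * z^(2*(j+1)) / (Nat.factorial (2*(j+1)+1)))
      (Real.cosh z - Real.sinh z / z) := by
    have h0 : (2*(0:ℕ)) * z^(2*0) / (Nat.factorial (2*0+1)) = 0 := by norm_num
    have := (hasSum_nat_add_iff (f := fun k : ℕ => (2*k) * z^(2*k) / (Nat.factorial (2*k+1))) 1).mpr
      (by simpa [h0] using hF)
    simpa using this
  rw [hshift.tsum_eq, Real.cosh_eq, Real.sinh_eq]
  have h32 : (2*z:ℝ) ^ ((3:ℝ)/2) = (2*z) * (2*z) ^ ((1:ℝ)/2) := by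
    rw [show (3:ℝ)/2 = 1 + (1:ℝ)/2 by norm_num, Real.rpow_add (by positivity), Real.rpow_one]
  rw [h32]
  field_simp

noncomputable def tA (z : ℝ) (n l : ℕ) : ℝ :=
  (-1 : ℝ) ^ l * Real.Gamma ((n : ℝ) + l) * Real.exp z /
    (Nat.factorial l * Real.sqrt π * Real.Gamma ((n : ℝ) - l) * (2 * z) ^ ((l : ℝ) + 1 / 2))

noncomputable def tB (z : ℝ) (n l : ℕ) : ℝ :=
  (-1 : ℝ) ^ n * Real.Gamma ((n : ℝ) + l) * Real.exp (-z) /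
    (Nat.factorial l * Real.sqrt π * Real.Gamma ((n : ℝ) - l) * (2 * z) ^ ((l : ℝ) + 1 / 2))
set_option maxHeartbeats 1000000 in
lemma step_term (n l : ℕ) (hn : 1 ≤ n) (hl : l ≤ n) (z : ℝ) (hz : 0 < z) :
    tA z (n+2) (l+1) + tB z (n+2) (l+1) =
      (tA z n (l+1) + tB z n (l+1)) - (2*(n:ℝ)+1)/z * (tA z (n+1) l + tB z (n+1) l) := by
  have hπ : (0:ℝ) < Real.sqrt π := Real.sqrt_pos.mpr Real.pi_pos
  have hq : (0:ℝ) < (2*z) ^ ((l:ℝ) + 1/2) := Real.rpow_pos_of_pos (by positivity) _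
  have hf : (0:ℝ) < (l.factorial : ℝ) := by exact_mod_cast l.factorial_pos
  have hfs : ((l+1).factorial : ℝ) = ((l:ℝ)+1) * l.factorial := by
    rw [Nat.factorial_succ]; push_cast; ring
  have hGp : (0:ℝ) < Real.Gamma ((n:ℝ) + l + 1) := Real.Gamma_pos_of_pos (by positivity)
  -- numerator Gammas
  have gN1 : Real.Gamma (((n:ℕ):ℝ) + 2 + (((l:ℕ):ℝ) + 1)) =
      ((n:ℝ)+(l:ℝ)+2) * (((n:ℝ)+(l:ℝ)+1) * Real.Gamma ((n:ℝ)+(l:ℝ)+1)) := by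
    rw [show ((n:ℝ)) + 2 + ((l:ℝ) + 1) = (((n:ℝ)+(l:ℝ)+2)) + 1 by ring,
      Real.Gamma_add_one (by positivity),
      show ((n:ℝ)+(l:ℝ)+2) = (((n:ℝ)+(l:ℝ)+1)) + 1 by ring,
      Real.Gamma_add_one (by positivity)]
  have gN2 : Real.Gamma ((n:ℝ) + ((l:ℝ) + 1)) = Real.Gamma ((n:ℝ)+(l:ℝ)+1) := by ring_nf
  have gN3 : Real.Gamma ((n:ℝ) + 1 + (l:ℝ)) = Real.Gamma ((n:ℝ)+(l:ℝ)+1) := by ring_nf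
  -- rpow
  have hr : (2*z) ^ (((l:ℝ)+1) + 1/2) = (2*z) * (2*z) ^ ((l:ℝ) + 1/2) := by
    rw [show ((l:ℝ)+1) + 1/2 = 1 + ((l:ℝ)+1/2) by ring, Real.rpow_add (by positivity),
      Real.rpow_one]
  simp only [tA, tB]
  push_cast
  rw [gN1, gN2, gN3, hr, hfs]
  -- denominator Gammas, case split
  rcases (by omega : l + 2 ≤ n ∨ n = l + 1 ∨ n = l) with hc | hc | hc
  · have hpos : (0:ℝ) < (n:ℝ) - l - 1 := by
      have : (l:ℝ) + 2 ≤ (n:ℝ) := by exact_mod_cast hc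
      linarith
    have hGd : (0:ℝ) < Real.Gamma ((n:ℝ) - l - 1) := Real.Gamma_pos_of_pos hpos
    have gD1 : Real.Gamma ((n:ℝ) + 2 - ((l:ℝ) + 1)) =
        ((n:ℝ)-(l:ℝ)) * (((n:ℝ)-(l:ℝ)-1) * Real.Gamma ((n:ℝ)-(l:ℝ)-1)) := by
      rw [show (n:ℝ) + 2 - ((l:ℝ)+1) = ((n:ℝ)-(l:ℝ)) + 1 by ring,
        Real.Gamma_add_one (by linarith), show (n:ℝ)-(l:ℝ) = ((n:ℝ)-(l:ℝ)-1) + 1 by ring,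
        Real.Gamma_add_one (by linarith)]
      ring
    have gD2 : Real.Gamma ((n:ℝ) - ((l:ℝ) + 1)) = Real.Gamma ((n:ℝ)-(l:ℝ)-1) := by ring_nf
    have gD3 : Real.Gamma ((n:ℝ) + 1 - (l:ℝ)) =
        ((n:ℝ)-(l:ℝ)) * (((n:ℝ)-(l:ℝ)-1) * Real.Gamma ((n:ℝ)-(l:ℝ)-1)) := by
      rw [show (n:ℝ) + 1 - (l:ℝ) = ((n:ℝ)-(l:ℝ)) + 1 by ring]
      rw [Real.Gamma_add_one (by linarith), show (n:ℝ)-(l:ℝ) = ((n:ℝ)-(l:ℝ)-1) + 1 by ring,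
        Real.Gamma_add_one (by linarith)]
      ring
    rw [gD1, gD2, gD3]
    have nz1 : Real.sqrt π ≠ 0 := hπ.ne'
    have nz2 : (2*z)^((l:ℝ)+1/2) ≠ 0 := hq.ne'
    have nz3 : ((l.factorial:ℝ)) ≠ 0 := hf.ne'
    have nz4 : Real.Gamma ((n:ℝ)+(l:ℝ)+1) ≠ 0 := hGp.ne'
    have nz5 : z ≠ 0 := hz.ne'
    have nz6 : ((l:ℝ)+1) ≠ 0 := by positivity
    have nz7 : (n:ℝ)-(l:ℝ) ≠ 0 := by linarith
    have nz8 : (n:ℝ)-(l:ℝ)-1 ≠ 0 := hpos.ne'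
    have nz9 : Real.Gamma ((n:ℝ)-(l:ℝ)-1) ≠ 0 := hGd.ne'
    field_simp
    ring
  · have hrl : (n:ℝ) = (l:ℝ)+1 := by rw [hc]; push_cast; ring
    have gD1 : Real.Gamma ((n:ℝ) + 2 - ((l:ℝ) + 1)) = 1 := by
      rw [show (n:ℝ) + 2 - ((l:ℝ)+1) = 1 + 1 by rw [hrl]; ring,
        Real.Gamma_add_one one_ne_zero, Real.Gamma_one]; norm_num
    have gD2 : Real.Gamma ((n:ℝ) - ((l:ℝ) + 1)) = 0 := by
      rw [show (n:ℝ) - ((l:ℝ)+1) = 0 by rw [hrl]; ring, Real.Gamma_zero]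
    have gD3 : Real.Gamma ((n:ℝ) + 1 - (l:ℝ)) = 1 := by
      rw [show (n:ℝ) + 1 - (l:ℝ) = 1 + 1 by rw [hrl]; ring,
        Real.Gamma_add_one one_ne_zero, Real.Gamma_one]; norm_num
    rw [gD1, gD2, gD3]
    rw [hrl] at hGp ⊢
    simp only [mul_zero, zero_mul, div_zero]
    have nz1 : Real.sqrt π ≠ 0 := hπ.ne'
    have nz2 : (2*z)^((l:ℝ)+1/2) ≠ 0 := hq.ne'
    have nz3 : ((l.factorial:ℝ)) ≠ 0 := hf.ne'
    have nz4 := hGp.ne'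
    have nz5 : z ≠ 0 := hz.ne'
    have nz6 : ((l:ℝ)+1) ≠ 0 := by positivity
    field_simp
    ring
  · have hrl : (n:ℝ) = (l:ℝ) := by rw [hc]
    have gD1 : Real.Gamma ((n:ℝ) + 2 - ((l:ℝ) + 1)) = 1 := by
      rw [show (n:ℝ) + 2 - ((l:ℝ)+1) = 1 by rw [hrl]; ring, Real.Gamma_one]
    have gD2 : Real.Gamma ((n:ℝ) - ((l:ℝ) + 1)) = 0 := by
      rw [show (n:ℝ) - ((l:ℝ)+1) = -((1:ℕ):ℝ) by rw [hrl]; push_cast; ring,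
        Real.Gamma_neg_nat_eq_zero]
    have gD3 : Real.Gamma ((n:ℝ) + 1 - (l:ℝ)) = 1 := by
      rw [show (n:ℝ) + 1 - (l:ℝ) = 1 by rw [hrl]; ring, Real.Gamma_one]
    rw [gD1, gD2, gD3]
    rw [hrl] at hGp ⊢
    simp only [mul_zero, zero_mul, div_zero]
    have nz1 : Real.sqrt π ≠ 0 := hπ.ne'
    have nz2 : (2*z)^((l:ℝ)+1/2) ≠ 0 := hq.ne'
    have nz3 : ((l.factorial:ℝ)) ≠ 0 := hf.ne'
    have nz4 := hGp.ne'
    have nz5 : z ≠ 0 := hz.ne'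
    have nz6 : ((l:ℝ)+1) ≠ 0 := by positivity
    field_simp
    ring
lemma t_zero (z : ℝ) (n l : ℕ) (h : n ≤ l) : tA z n l + tB z n l = 0 := by
  have hΓ : Real.Gamma ((n:ℝ) - l) = 0 := by
    rw [show (n:ℝ) - (l:ℝ) = -(((l-n:ℕ)):ℝ) by rw [Nat.cast_sub h]; ring,
      Real.Gamma_neg_nat_eq_zero]
  simp [tA, tB, hΓ]

lemma t_zero_index (z : ℝ) (hz : 0 < z) (n : ℕ) (hn : 1 ≤ n) :
    tA z (n+2) 0 + tB z (n+2) 0 = tA z n 0 + tB z n 0 := by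
  simp only [tA, tB, Nat.cast_zero, add_zero, sub_zero, pow_zero, Nat.factorial_zero,
    Nat.cast_one, one_mul]
  push_cast
  have hn' : (0:ℝ) < (n:ℝ) := by exact_mod_cast Nat.lt_of_lt_of_le Nat.zero_lt_one hn
  have h1 : Real.Gamma ((n:ℝ)) ≠ 0 := (Real.Gamma_pos_of_pos hn').ne'
  have h2 : Real.Gamma ((n:ℝ)+2) ≠ 0 := (Real.Gamma_pos_of_pos (by positivity)).ne'
  have hπ : Real.sqrt π ≠ 0 := (Real.sqrt_pos.mpr Real.pi_pos).ne'
  have hq : (2*z) ^ ((0:ℝ)+1/2) ≠ 0 := (Real.rpow_pos_of_pos (by positivity) _).ne'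
  field_simp
  ring

lemma rhs_rec (n : ℕ) (hn : 1 ≤ n) (z : ℝ) (hz : 0 < z) :
    (∑ l ∈ Finset.range (n+2), (tA z (n+2) l + tB z (n+2) l)) =
      (∑ l ∈ Finset.range n, (tA z n l + tB z n l))
      - (2*(n:ℝ)+1)/z * ∑ l ∈ Finset.range (n+1), (tA z (n+1) l + tB z (n+1) l) := by
  have hext : (∑ l ∈ Finset.range n, (tA z n l + tB z n l))
      = ∑ l ∈ Finset.range (n+2), (tA z n l + tB z n l) := by
    apply Finset.sum_subset (Finset.range_subset_range.mpr (by omega))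
    intro l _ hl
    exact t_zero z n l (by simp only [Finset.mem_range] at hl; omega)
  rw [hext, Finset.mul_sum,
    Finset.sum_range_succ' (fun l => tA z (n+2) l + tB z (n+2) l) (n+1),
    Finset.sum_range_succ' (fun l => tA z n l + tB z n l) (n+1)]
  have key : ∀ l ∈ Finset.range (n+1), tA z (n+2) (l+1) + tB z (n+2) (l+1)
      = (tA z n (l+1) + tB z n (l+1)) - (2*(n:ℝ)+1)/z * (tA z (n+1) l + tB z (n+1) l) :=
    fun l hl => step_term n l hn (by simp only [Finset.mem_range] at hl; omega) z hz
  rw [Finset.sum_congr rfl key, Finset.sum_sub_distrib, t_zero_index z hz n hn]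
  ring

lemma base1 (z : ℝ) (hz : 0 < z) :
    (∑ l ∈ Finset.range 1, (tA z 1 l + tB z 1 l))
      = (Real.exp z - Real.exp (-z)) / (Real.sqrt π * (2*z) ^ ((1:ℝ)/2)) := by
  rw [Finset.sum_range_one]
  simp only [tA, tB, Nat.cast_zero, add_zero, sub_zero, pow_zero, pow_one, Nat.factorial_zero,
    Nat.cast_one, one_mul, Real.Gamma_one, zero_add]
  have hq : (0:ℝ) < (2*z) ^ ((1:ℝ)/2) := Real.rpow_pos_of_pos (by positivity) _
  have hπ : (0:ℝ) < Real.sqrt π := Real.sqrt_pos.mpr Real.pi_pos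
  field_simp
  ring

lemma base2 (z : ℝ) (hz : 0 < z) :
    (∑ l ∈ Finset.range 2, (tA z 2 l + tB z 2 l))
      = (Real.exp z + Real.exp (-z)) / (Real.sqrt π * (2*z) ^ ((1:ℝ)/2))
      - 2*(Real.exp z - Real.exp (-z)) / (Real.sqrt π * (2*z) ^ ((3:ℝ)/2)) := by
  rw [Finset.sum_range_succ, Finset.sum_range_one]
  have g2 : Real.Gamma (2:ℝ) = 1 := by
    rw [show (2:ℝ) = 1 + 1 by norm_num, Real.Gamma_add_one one_ne_zero, Real.Gamma_one]; norm_num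
  have g3 : Real.Gamma (3:ℝ) = 2 := by
    rw [show (3:ℝ) = 2 + 1 by norm_num, Real.Gamma_add_one two_ne_zero, g2]; norm_num
  simp only [tA, tB, Nat.cast_zero, add_zero, sub_zero, pow_zero, pow_one, Nat.factorial_zero,
    Nat.factorial_one, Nat.cast_one, Nat.cast_ofNat, one_mul, zero_add]
  rw [show (2:ℝ) + 1 = 3 by norm_num, show (2:ℝ) - 1 = 1 by norm_num, g2, g3, Real.Gamma_one]
  have hq : (0:ℝ) < (2*z) ^ ((1:ℝ)/2) := Real.rpow_pos_of_pos (by positivity) _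
  have hπ : (0:ℝ) < Real.sqrt π := Real.sqrt_pos.mpr Real.pi_pos
  have h32 : (2*z:ℝ) ^ ((1:ℝ)+1/2) = (2*z) * (2*z) ^ ((1:ℝ)/2) := by
    rw [show (1:ℝ)+1/2 = 1 + (1:ℝ)/2 by norm_num, Real.rpow_add (by positivity), Real.rpow_one]
  have h32' : (2*z:ℝ) ^ ((3:ℝ)/2) = (2*z) * (2*z) ^ ((1:ℝ)/2) := by
    rw [show (3:ℝ)/2 = 1 + (1:ℝ)/2 by norm_num, Real.rpow_add (by positivity), Real.rpow_one]
  rw [h32, h32']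
  field_simp
  ring

lemma key_all (z : ℝ) (hz : 0 < z) :
    ∀ m : ℕ, 1 ≤ m → besselI ((m:ℝ) - 1/2) z = ∑ l ∈ Finset.range m, (tA z m l + tB z m l) := by
  intro m
  induction m using Nat.strong_induction_on with
  | _ m ih =>
    intro hm
    rcases (show m = 1 ∨ m = 2 ∨ 3 ≤ m by omega) with rfl | rfl | h3
    · rw [show ((1:ℕ):ℝ) - 1/2 = (1/2 : ℝ) by norm_num, bI_half z hz, base1 z hz]
    · rw [show ((2:ℕ):ℝ) - 1/2 = ((3:ℝ)/2) by norm_num, bI_3half z hz, base2 z hz]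
    · obtain ⟨k, rfl⟩ : ∃ k, m = k + 3 := ⟨m - 3, by omega⟩
      have h1 := ih (k+1) (by omega) (by omega)
      have h2 := ih (k+2) (by omega) (by omega)
      have hν : (1:ℝ) ≤ ((k+2:ℕ):ℝ) - 1/2 := by
        push_cast
        have : (0:ℝ) ≤ (k:ℝ) := Nat.cast_nonneg k
        linarith
      rw [show ((k+3:ℕ):ℝ) - 1/2 = (((k+2:ℕ):ℝ) - 1/2) + 1 by push_cast; ring,
        besselI_rec _ _ hν hz,
        show (((k+2:ℕ):ℝ) - 1/2) - 1 = ((k+1:ℕ):ℝ) - 1/2 by push_cast; ring,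
        h1, h2,
        show 2*(((k+2:ℕ):ℝ) - 1/2)/z = (2*((k+1:ℕ):ℝ)+1)/z by push_cast; ring]
      have := rhs_rec (k+1) (by omega) z hz
      rw [show k+1+2 = k+3 from rfl, show k+1+1 = k+2 from rfl] at this
      exact this.symm

/-- finite closed form for the half-integer order modified Bessel
function `I_{n-1/2}(z)`. -/
theorem besselI_half_integer (n : ℕ) (hn : 0 < n) (z : ℝ) (hz : 0 < z) :
    besselI ((n : ℝ) - 1 / 2) z =
      (∑ l ∈ Finset.range n,
        (-1 : ℝ) ^ l * Real.Gamma ((n : ℝ) + l) * Real.exp z /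
          (Nat.factorial l * Real.sqrt π * Real.Gamma ((n : ℝ) - l) *
            (2 * z) ^ ((l : ℝ) + 1 / 2))) +
      ∑ l ∈ Finset.range n,
        (-1 : ℝ) ^ n * Real.Gamma ((n : ℝ) + l) * Real.exp (-z) /
          (Nat.factorial l * Real.sqrt π * Real.Gamma ((n : ℝ) - l) *
            (2 * z) ^ ((l : ℝ) + 1 / 2)) := by
  rw [key_all z hz n hn, Finset.sum_add_distrib]
  simp only [tA, tB]
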